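/- arXiv:2404.03218 — 5 statements merged into one kernel-verified Lean document; each statement's English description precedes it below -/
import Mathlib

section
/- Let R be proper, lower semicontinuous, strongly convex with modulus σ on a Hilbert space X. For ξ, ξ' ∈ X set x = ∇R*(ξ) (so ξ ∈ ∂R(x)) and let x̂ ∈ dom(R). Then D_R^{ξ'}(x̂, ∇R*(ξ')) - D_R^{ξ}(x̂, x) ≤ (1/(4σ)) ‖ξ' - ξ‖² + ⟨ξ' - ξ, x - x̂⟩, where D_R^{η}(z, w) := R(z) - R(w) - ⟨η, z - w⟩. -/
open scoped RealInnerProductSpace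

/-- Existence of the maximizer in the definition of `Rstar ξ`. -/
lemma breg_exists_argmax
    {X : Type*} [NormedAddCommGroup X] [InnerProductSpace ℝ X] [CompleteSpace X]
    (R : X → EReal) (σ : ℝ) (hσ : 0 < σ)
    (hproper_bot : ∀ x, R x ≠ ⊥)
    (hlsc : LowerSemicontinuous R)
    (hsc : ∀ x' x : X, R x' ≠ ⊤ → R x ≠ ⊤ → ∀ t : ℝ, 0 ≤ t → t ≤ 1 →
      R (t • x' + (1 - t) • x) + ((σ * t * (1 - t) * ‖x' - x‖ ^ 2 : ℝ) : EReal)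
        ≤ ((t : ℝ) : EReal) * R x' + (((1 - t : ℝ)) : EReal) * R x)
    (Rstar : X → ℝ)
    (hconj : ∀ ξ : X, ((Rstar ξ : ℝ) : EReal) = ⨆ x : X, (((inner ℝ ξ x : ℝ)) : EReal) - R x)
    (ξ : X) :
    ∃ xb : X, R xb = ((((inner ℝ ξ xb : ℝ)) - Rstar ξ : ℝ) : EReal) := by
  have h_le : ∀ x : X, (((inner ℝ ξ x : ℝ)) : EReal) - R x ≤ ((Rstar ξ : ℝ) : EReal) := by
    intro x
    rw [hconj]
    exact le_iSup (fun x : X => (((inner ℝ ξ x : ℝ)) : EReal) - R x) x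
  -- approximating sequence
  have approx : ∀ n : ℕ, ∃ x : X,
      ((Rstar ξ - 1 / (n + 1) : ℝ) : EReal) < (((inner ℝ ξ x : ℝ)) : EReal) - R x := by
    intro n
    have h1 : ((Rstar ξ - 1 / (n + 1) : ℝ) : EReal) < ((Rstar ξ : ℝ) : EReal) := by
      have : (0:ℝ) < 1 / (n + 1) := by positivity
      exact_mod_cast (by linarith : (Rstar ξ - 1 / (n + 1) : ℝ) < Rstar ξ)
    rw [hconj] at h1
    exact lt_iSup_iff.mp h1
  choose u hu using approx
  have htop : ∀ n, R (u n) ≠ ⊤ := by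
    intro n h
    have := hu n
    rw [h, EReal.sub_top] at this
    exact not_lt_bot this
  set r : ℕ → ℝ := fun n => (R (u n)).toReal with hr_def
  have hR : ∀ n, R (u n) = ((r n : ℝ) : EReal) :=
    fun n => (EReal.coe_toReal (htop n) (hproper_bot _)).symm
  have hlo : ∀ n, Rstar ξ - 1 / (n + 1) < inner ℝ ξ (u n) - r n := by
    intro n
    have := hu n
    rw [hR n, ← EReal.coe_sub] at this
    exact_mod_cast this
  have hhi : ∀ n, (inner ℝ ξ (u n) : ℝ) - r n ≤ Rstar ξ := by
    intro n
    have := h_le (u n)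
    rw [hR n, ← EReal.coe_sub] at this
    exact_mod_cast this
  -- Cauchy estimate
  have key : ∀ n m : ℕ, ‖u n - u m‖ ^ 2 ≤ 2 / σ * (1 / (n + 1) + 1 / (m + 1)) := by
    intro n m
    have h2 := hsc (u n) (u m) (htop n) (htop m) (1/2) (by norm_num) (by norm_num)
    set mid := (1/2 : ℝ) • u n + (1 - 1/2 : ℝ) • u m with hmid_def
    have hmid_top : R mid ≠ ⊤ := by
      intro h
      rw [h, hR n, hR m] at h2
      rw [EReal.top_add_of_ne_bot (by exact_mod_cast EReal.coe_ne_bot _)] at h2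
      have : ((1/2 : ℝ) : EReal) * ((r n : ℝ) : EReal) + ((1 - 1/2 : ℝ) : EReal) * ((r m : ℝ) : EReal)
          = ((1/2 * r n + (1 - 1/2) * r m : ℝ) : EReal) := by push_cast; ring
      rw [this] at h2
      exact (EReal.coe_ne_top _) (top_le_iff.mp h2)
    have hmid_bot : R mid ≠ ⊥ := hproper_bot _
    set ρ := (R mid).toReal with hρ_def
    have hmid : R mid = ((ρ : ℝ) : EReal) := (EReal.coe_toReal hmid_top hmid_bot).symm
    have h2' : ρ + σ * (1/2) * (1 - 1/2) * ‖u n - u m‖ ^ 2 ≤ 1/2 * r n + (1 - 1/2) * r m := by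
      rw [hmid, hR n, hR m] at h2
      have h2'' : ((ρ + σ * (1/2) * (1 - 1/2) * ‖u n - u m‖ ^ 2 : ℝ) : EReal)
          ≤ ((1/2 * r n + (1 - 1/2) * r m : ℝ) : EReal) := by
        push_cast at h2 ⊢
        convert h2 using 2 <;> ring_nf
      exact_mod_cast h2''
    have h3 : (inner ℝ ξ mid : ℝ) - ρ ≤ Rstar ξ := by
      have := h_le mid
      rw [hmid, ← EReal.coe_sub] at this
      exact_mod_cast this
    have hmidinner : (inner ℝ ξ mid : ℝ) = 1/2 * inner ℝ ξ (u n) + (1 - 1/2) * inner ℝ ξ (u m) := by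
      simp [hmid_def, inner_add_right, inner_smul_right]
    have hn := hlo n
    have hm := hlo m
    rw [hmidinner] at h3
    have hσ' : (0:ℝ) < σ := hσ
    rw [div_mul_eq_mul_div, le_div_iff₀ hσ']
    nlinarith [h2', h3, hn, hm]
  -- Cauchy sequence
  have hcauchy : CauchySeq u := by
    rw [Metric.cauchySeq_iff]
    intro ε hε
    obtain ⟨N, hN⟩ := exists_nat_gt (4 / (σ * ε ^ 2))
    refine ⟨N, fun m hm n hn => ?_⟩
    have h1 : ‖u m - u n‖ ^ 2 ≤ 2 / σ * (1 / (m + 1) + 1 / (n + 1)) := key m n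
    have hm1 : (1 : ℝ) / (m + 1) ≤ 1 / (N + 1) := by
      apply one_div_le_one_div_of_le (by positivity)
      exact_mod_cast Nat.succ_le_succ hm
    have hn1 : (1 : ℝ) / (n + 1) ≤ 1 / (N + 1) := by
      apply one_div_le_one_div_of_le (by positivity)
      exact_mod_cast Nat.succ_le_succ hn
    have h2 : ‖u m - u n‖ ^ 2 < ε ^ 2 := by
      have hNpos : (0:ℝ) < N + 1 := by positivity
      have : 4 / (σ * ε ^ 2) < N + 1 := lt_of_lt_of_le hN (by linarith)
      have h4 : 4 / (N + 1) < σ * ε ^ 2 := by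
        rw [div_lt_iff₀ hNpos]
        rw [div_lt_iff₀ (by positivity)] at this
        linarith
      have h5 : 2 / σ * (1 / (m + 1) + 1 / (n + 1)) ≤ 2 / σ * (2 / (N + 1)) := by
        apply mul_le_mul_of_nonneg_left _ (by positivity)
        calc (1:ℝ)/(m+1) + 1/(n+1) ≤ 1/(N+1) + 1/(N+1) := by linarith
          _ = 2/(N+1) := by ring
      have h6 : 2 / σ * (2 / (N + 1)) = 4 / (N + 1) / σ := by ring
      calc ‖u m - u n‖ ^ 2 ≤ 2 / σ * (2 / (N + 1)) := le_trans h1 h5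
        _ = 4 / (N + 1) / σ := h6
        _ < σ * ε ^ 2 / σ := by gcongr
        _ = ε ^ 2 := by field_simp
    rw [dist_eq_norm]
    nlinarith [norm_nonneg (u m - u n), hε]
  obtain ⟨xb, hxb⟩ := cauchySeq_tendsto_of_complete hcauchy
  have hinner : Filter.Tendsto (fun n => (inner ℝ ξ (u n) : ℝ)) Filter.atTop (nhds (inner ℝ ξ xb)) :=
    Filter.Tendsto.inner tendsto_const_nhds hxb
  have hinv : Filter.Tendsto (fun n : ℕ => (1 : ℝ) / (n + 1)) Filter.atTop (nhds 0) :=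
    tendsto_one_div_add_atTop_nhds_zero_nat
  have hf : Filter.Tendsto (fun n => (inner ℝ ξ (u n) : ℝ) - r n) Filter.atTop (nhds (Rstar ξ)) := by
    exact tendsto_of_tendsto_of_tendsto_of_le_of_le
      (by simpa using tendsto_const_nhds.sub hinv) tendsto_const_nhds
      (fun n => (hlo n).le) hhi
  have hrt : Filter.Tendsto r Filter.atTop (nhds ((inner ℝ ξ xb : ℝ) - Rstar ξ)) := by
    have := hinner.sub hf
    simpa using this
  set rb := (inner ℝ ξ xb : ℝ) - Rstar ξ with hrb_def
  -- lower semicontinuity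
  have hlsc' : R xb ≤ ((rb : ℝ) : EReal) := by
    by_contra h
    push_neg at h
    obtain ⟨c, hc1, hc2⟩ := EReal.exists_between_coe_real h
    have hev : ∀ᶠ y in nhds xb, ((c : ℝ) : EReal) < R y := hlsc xb c hc2
    have hev2 : ∀ᶠ n in Filter.atTop, c ≤ r n := by
      filter_upwards [hxb.eventually hev] with n hn
      rw [hR n] at hn
      exact le_of_lt (by exact_mod_cast hn)
    have : c ≤ rb := ge_of_tendsto hrt hev2
    exact absurd hc1 (not_lt.mpr (by exact_mod_cast this))
  refine ⟨xb, le_antisymm ?_ ?_⟩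
  · exact hlsc'
  · -- from h_le xb : inner ℝ - R xb ≤ Rstar
    have hxb_top : R xb ≠ ⊤ := fun h => by rw [h] at hlsc'; exact (EReal.coe_ne_top _) (top_le_iff.mp hlsc')
    have hxbR : R xb = (((R xb).toReal : ℝ) : EReal) := (EReal.coe_toReal hxb_top (hproper_bot _)).symm
    have := h_le xb
    rw [hxbR, ← EReal.coe_sub] at this
    have h' : (inner ℝ ξ xb : ℝ) - (R xb).toReal ≤ Rstar ξ := by exact_mod_cast this
    rw [hxbR]
    exact_mod_cast (by linarith : rb ≤ (R xb).toReal)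


/-- Strong subgradient inequality at the maximizer. -/
lemma breg_subgrad
    {X : Type*} [NormedAddCommGroup X] [InnerProductSpace ℝ X]
    (R : X → EReal) (σ : ℝ) (hσ : 0 < σ)
    (hproper_bot : ∀ x, R x ≠ ⊥)
    (hsc : ∀ x' x : X, R x' ≠ ⊤ → R x ≠ ⊤ → ∀ t : ℝ, 0 ≤ t → t ≤ 1 →
      R (t • x' + (1 - t) • x) + ((σ * t * (1 - t) * ‖x' - x‖ ^ 2 : ℝ) : EReal)
        ≤ ((t : ℝ) : EReal) * R x' + (((1 - t : ℝ)) : EReal) * R x)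
    (Rstar : X → ℝ)
    (hconj : ∀ ξ : X, ((Rstar ξ : ℝ) : EReal) = ⨆ x : X, (((inner ℝ ξ x : ℝ)) : EReal) - R x)
    (ξ xb : X)
    (hxb : R xb = ((((inner ℝ ξ xb : ℝ)) - Rstar ξ : ℝ) : EReal))
    (x : X) (hx : R x ≠ ⊤) :
    ((inner ℝ ξ xb : ℝ) - Rstar ξ) + (inner ℝ ξ (x - xb) : ℝ) + σ * ‖x - xb‖ ^ 2 ≤ (R x).toReal := by
  have h_le : ∀ y : X, (((inner ℝ ξ y : ℝ)) : EReal) - R y ≤ ((Rstar ξ : ℝ) : EReal) := by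
    intro y
    rw [hconj]
    exact le_iSup (fun y : X => (((inner ℝ ξ y : ℝ)) : EReal) - R y) y
  set rb := (inner ℝ ξ xb : ℝ) - Rstar ξ with hrb_def
  set r := (R x).toReal with hr_def
  have hRx : R x = ((r : ℝ) : EReal) := (EReal.coe_toReal hx (hproper_bot _)).symm
  have hxb_top : R xb ≠ ⊤ := by rw [hxb]; exact EReal.coe_ne_top _
  have key : ∀ t : ℝ, 0 < t → t ≤ 1 →
      (inner ℝ ξ (x - xb) : ℝ) + σ * (1 - t) * ‖x - xb‖ ^ 2 ≤ r - rb := by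
    intro t ht0 ht1
    have h2 := hsc x xb hx hxb_top t ht0.le ht1
    set mid := t • x + (1 - t) • xb with hmid_def
    have hmid_top : R mid ≠ ⊤ := by
      intro h
      rw [h, hRx, hxb] at h2
      rw [EReal.top_add_of_ne_bot (by exact_mod_cast EReal.coe_ne_bot _)] at h2
      have : ((t : ℝ) : EReal) * ((r : ℝ) : EReal) + ((1 - t : ℝ) : EReal) * ((rb : ℝ) : EReal)
          = ((t * r + (1 - t) * rb : ℝ) : EReal) := by push_cast; ring
      rw [this] at h2
      exact (EReal.coe_ne_top _) (top_le_iff.mp h2)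
    set ρ := (R mid).toReal with hρ_def
    have hmid : R mid = ((ρ : ℝ) : EReal) := (EReal.coe_toReal hmid_top (hproper_bot _)).symm
    have h2' : ρ + σ * t * (1 - t) * ‖x - xb‖ ^ 2 ≤ t * r + (1 - t) * rb := by
      rw [hmid, hRx, hxb] at h2
      have h2'' : ((ρ + σ * t * (1 - t) * ‖x - xb‖ ^ 2 : ℝ) : EReal)
          ≤ ((t * r + (1 - t) * rb : ℝ) : EReal) := by
        push_cast at h2 ⊢
        convert h2 using 2
      exact_mod_cast h2''
    have h3 : (inner ℝ ξ mid : ℝ) - ρ ≤ Rstar ξ := by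
      have := h_le mid
      rw [hmid, ← EReal.coe_sub] at this
      exact_mod_cast this
    have hmidinner : (inner ℝ ξ mid : ℝ) = t * inner ℝ ξ x + (1 - t) * inner ℝ ξ xb := by
      simp [hmid_def, inner_add_right, inner_smul_right]
    rw [hmidinner] at h3
    have hexp : (inner ℝ ξ (x - xb) : ℝ) = inner ℝ ξ x - inner ℝ ξ xb := inner_sub_right _ _ _
    have hA : t * ((inner ℝ ξ (x - xb) : ℝ) + σ * (1 - t) * ‖x - xb‖ ^ 2) ≤ t * (r - rb) := by
      nlinarith [h2', h3, hexp]
    exact le_of_mul_le_mul_left hA ht0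
  have hgoal : (inner ℝ ξ (x - xb) : ℝ) + σ * ‖x - xb‖ ^ 2 ≤ r - rb := by
    apply le_of_forall_pos_le_add
    intro ε hε
    set D := σ * ‖x - xb‖ ^ 2 with hD_def
    have hD : 0 ≤ D := by positivity
    set t := min 1 (ε / (D + ε)) with ht_def
    have ht0 : 0 < t := lt_min one_pos (by positivity)
    have ht1 : t ≤ 1 := min_le_left _ _
    have hk := key t ht0 ht1
    have htD : t * (D + ε) ≤ ε := by
      have h1 : t ≤ ε / (D + ε) := min_le_right _ _
      rw [← le_div_iff₀ (by positivity)]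
      exact h1
    nlinarith [hk, htD, ht0]
  linarith [hgoal]

/-- Two-sided bound on `Rstar ξ'` from the maximizer at `ξ`. -/
lemma breg_rstar_bounds
    {X : Type*} [NormedAddCommGroup X] [InnerProductSpace ℝ X]
    (R : X → EReal) (σ : ℝ) (hσ : 0 < σ)
    (hproper_bot : ∀ x, R x ≠ ⊥)
    (hsc : ∀ x' x : X, R x' ≠ ⊤ → R x ≠ ⊤ → ∀ t : ℝ, 0 ≤ t → t ≤ 1 →
      R (t • x' + (1 - t) • x) + ((σ * t * (1 - t) * ‖x' - x‖ ^ 2 : ℝ) : EReal)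
        ≤ ((t : ℝ) : EReal) * R x' + (((1 - t : ℝ)) : EReal) * R x)
    (Rstar : X → ℝ)
    (hconj : ∀ ξ : X, ((Rstar ξ : ℝ) : EReal) = ⨆ x : X, (((inner ℝ ξ x : ℝ)) : EReal) - R x)
    (ξ xb : X)
    (hxb : R xb = ((((inner ℝ ξ xb : ℝ)) - Rstar ξ : ℝ) : EReal))
    (ξ' : X) :
    Rstar ξ + (inner ℝ (ξ' - ξ) xb : ℝ) ≤ Rstar ξ' ∧
    Rstar ξ' ≤ Rstar ξ + (inner ℝ (ξ' - ξ) xb : ℝ) + 1 / (4 * σ) * ‖ξ' - ξ‖ ^ 2 := by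
  constructor
  · -- lower bound
    have h1 : (((inner ℝ ξ' xb : ℝ)) : EReal) - R xb ≤ ((Rstar ξ' : ℝ) : EReal) := by
      rw [hconj ξ']
      exact le_iSup (fun y : X => (((inner ℝ ξ' y : ℝ)) : EReal) - R y) xb
    rw [hxb, ← EReal.coe_sub] at h1
    have h2 : (inner ℝ ξ' xb : ℝ) - ((inner ℝ ξ xb : ℝ) - Rstar ξ) ≤ Rstar ξ' := by exact_mod_cast h1
    have hexp : (inner ℝ (ξ' - ξ) xb : ℝ) = inner ℝ ξ' xb - inner ℝ ξ xb := inner_sub_left _ _ _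
    linarith
  · -- upper bound
    have key : ((Rstar ξ' : ℝ) : EReal)
        ≤ ((Rstar ξ + (inner ℝ (ξ' - ξ) xb : ℝ) + 1 / (4 * σ) * ‖ξ' - ξ‖ ^ 2 : ℝ) : EReal) := by
      rw [hconj ξ']
      apply iSup_le
      intro x
      by_cases hx : R x = ⊤
      · rw [hx, EReal.sub_top]; exact bot_le
      · have hsg := breg_subgrad R σ hσ hproper_bot hsc Rstar hconj ξ xb hxb x hx
        have hRx : R x = (((R x).toReal : ℝ) : EReal) := (EReal.coe_toReal hx (hproper_bot _)).symm
        rw [hRx, ← EReal.coe_sub, EReal.coe_le_coe_iff]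
        set r := (R x).toReal
        have hcs : (inner ℝ (ξ' - ξ) (x - xb) : ℝ) ≤ ‖ξ' - ξ‖ * ‖x - xb‖ := real_inner_le_norm _ _
        have e1 : (inner ℝ (ξ' - ξ) (x - xb) : ℝ)
            = inner ℝ ξ' x - inner ℝ ξ' xb - inner ℝ ξ x + inner ℝ ξ xb := by
          simp [inner_sub_left, inner_sub_right]; ring
        have e2 : (inner ℝ ξ (x - xb) : ℝ) = inner ℝ ξ x - inner ℝ ξ xb := inner_sub_right _ _ _
        have e3 : (inner ℝ (ξ' - ξ) xb : ℝ) = inner ℝ ξ' xb - inner ℝ ξ xb := inner_sub_left _ _ _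
        have hab : ‖ξ' - ξ‖ * ‖x - xb‖ ≤ σ * ‖x - xb‖ ^ 2 + 1 / (4 * σ) * ‖ξ' - ξ‖ ^ 2 := by
          rw [← sub_nonneg]
          have heq : σ * ‖x - xb‖ ^ 2 + 1 / (4 * σ) * ‖ξ' - ξ‖ ^ 2 - ‖ξ' - ξ‖ * ‖x - xb‖
              = (‖ξ' - ξ‖ - 2 * σ * ‖x - xb‖) ^ 2 / (4 * σ) := by
            field_simp
            ring
          rw [heq]
          positivity
        linarith [hsg, hcs, hab]
    exact_mod_cast key

/-- The gradient of `Rstar` at `ξ` is the maximizer. -/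
lemma breg_gradient_eq
    {X : Type*} [NormedAddCommGroup X] [InnerProductSpace ℝ X] [CompleteSpace X]
    (R : X → EReal) (σ : ℝ) (hσ : 0 < σ)
    (hproper_bot : ∀ x, R x ≠ ⊥)
    (hsc : ∀ x' x : X, R x' ≠ ⊤ → R x ≠ ⊤ → ∀ t : ℝ, 0 ≤ t → t ≤ 1 →
      R (t • x' + (1 - t) • x) + ((σ * t * (1 - t) * ‖x' - x‖ ^ 2 : ℝ) : EReal)
        ≤ ((t : ℝ) : EReal) * R x' + (((1 - t : ℝ)) : EReal) * R x)
    (Rstar : X → ℝ)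
    (hconj : ∀ ξ : X, ((Rstar ξ : ℝ) : EReal) = ⨆ x : X, (((inner ℝ ξ x : ℝ)) : EReal) - R x)
    (ξ xb : X)
    (hxb : R xb = ((((inner ℝ ξ xb : ℝ)) - Rstar ξ : ℝ) : EReal)) :
    gradient Rstar ξ = xb := by
  have hbd : ∀ ξ' : X, |Rstar ξ' - Rstar ξ - (inner ℝ (ξ' - ξ) xb : ℝ)|
      ≤ 1 / (4 * σ) * ‖ξ' - ξ‖ ^ 2 := by
    intro ξ'
    obtain ⟨hl, hu⟩ := breg_rstar_bounds R σ hσ hproper_bot hsc Rstar hconj ξ xb hxb ξ'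
    rw [abs_le]
    constructor
    · have : 0 ≤ 1 / (4 * σ) * ‖ξ' - ξ‖ ^ 2 := by positivity
      linarith
    · linarith
  have hgrad : HasGradientAt Rstar xb ξ := by
    rw [hasGradientAt_iff_hasFDerivAt, hasFDerivAt_iff_isLittleO_nhds_zero,
      Asymptotics.isLittleO_iff]
    intro c hc
    filter_upwards [Metric.ball_mem_nhds (0 : X) (show (0:ℝ) < 4 * σ * c by positivity)] with h hh
    rw [Metric.mem_ball, dist_zero_right] at hh
    have happ : (InnerProductSpace.toDual ℝ X xb) h = (inner ℝ h xb : ℝ) := by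
      rw [InnerProductSpace.toDual_apply_apply]
      exact real_inner_comm _ _
    rw [happ]
    have h1 := hbd (ξ + h)
    rw [add_sub_cancel_left] at h1
    calc |Rstar (ξ + h) - Rstar ξ - (inner ℝ h xb : ℝ)| ≤ 1 / (4 * σ) * ‖h‖ ^ 2 := h1
      _ ≤ c * ‖h‖ := by
          rw [div_mul_eq_mul_div, one_mul, div_le_iff₀ (by positivity)]
          nlinarith [norm_nonneg h, hh]
  exact hgrad.gradient

/-- one-step Bregman distance estimate. With `x = ∇R*(ξ)` one has
`D_R^{ξ'}(x̂, ∇R*(ξ')) - D_R^{ξ}(x̂, x) ≤ ‖ξ' - ξ‖²/(4σ) + ⟨ξ' - ξ, x - x̂⟩`. -/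
theorem bregman_one_step_estimate
    {X : Type*} [NormedAddCommGroup X] [InnerProductSpace ℝ X] [CompleteSpace X]
    (R : X → EReal) (σ : ℝ) (hσ : 0 < σ)
    (hproper_bot : ∀ x, R x ≠ ⊥) (hproper_top : ∃ x, R x ≠ ⊤)
    (hlsc : LowerSemicontinuous R)
    (hsc : ∀ x' x : X, R x' ≠ ⊤ → R x ≠ ⊤ → ∀ t : ℝ, 0 ≤ t → t ≤ 1 →
      R (t • x' + (1 - t) • x) + ((σ * t * (1 - t) * ‖x' - x‖ ^ 2 : ℝ) : EReal)
        ≤ ((t : ℝ) : EReal) * R x' + (((1 - t : ℝ)) : EReal) * R x)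
    (Rstar : X → ℝ)
    (hconj : ∀ ξ : X, ((Rstar ξ : ℝ) : EReal) = ⨆ x : X, (((inner ℝ ξ x : ℝ)) : EReal) - R x)
    (ξ ξ' xh : X) (hxh : R xh ≠ ⊤) :
    (R xh - R (gradient Rstar ξ') - ((inner ℝ ξ' (xh - gradient Rstar ξ') : ℝ) : EReal))
      - (R xh - R (gradient Rstar ξ) - ((inner ℝ ξ (xh - gradient Rstar ξ) : ℝ) : EReal))
    ≤ ((1 / (4 * σ) * ‖ξ' - ξ‖ ^ 2
        + inner ℝ (ξ' - ξ) (gradient Rstar ξ - xh) : ℝ) : EReal) := by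
  obtain ⟨xb, hxb⟩ := breg_exists_argmax R σ hσ hproper_bot hlsc hsc Rstar hconj ξ
  obtain ⟨xb', hxb'⟩ := breg_exists_argmax R σ hσ hproper_bot hlsc hsc Rstar hconj ξ'
  have hg : gradient Rstar ξ = xb :=
    breg_gradient_eq R σ hσ hproper_bot hsc Rstar hconj ξ xb hxb
  have hg' : gradient Rstar ξ' = xb' :=
    breg_gradient_eq R σ hσ hproper_bot hsc Rstar hconj ξ' xb' hxb'
  obtain ⟨-, hu⟩ := breg_rstar_bounds R σ hσ hproper_bot hsc Rstar hconj ξ xb hxb ξ'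
  set rh := (R xh).toReal with hrh_def
  have hRxh : R xh = ((rh : ℝ) : EReal) := (EReal.coe_toReal hxh (hproper_bot _)).symm
  rw [hg, hg', hRxh, hxb, hxb']
  rw [← EReal.coe_sub, ← EReal.coe_sub, ← EReal.coe_sub, ← EReal.coe_sub, ← EReal.coe_sub,
    EReal.coe_le_coe_iff]
  have e1 : (inner ℝ ξ' (xh - xb') : ℝ) = inner ℝ ξ' xh - inner ℝ ξ' xb' := inner_sub_right _ _ _
  have e2 : (inner ℝ ξ (xh - xb) : ℝ) = inner ℝ ξ xh - inner ℝ ξ xb := inner_sub_right _ _ _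
  have e3 : (inner ℝ (ξ' - ξ) (xb - xh) : ℝ)
      = inner ℝ ξ' xb - inner ℝ ξ' xh - inner ℝ ξ xb + inner ℝ ξ xh := by
    simp [inner_sub_left, inner_sub_right]; ring
  have e4 : (inner ℝ (ξ' - ξ) xb : ℝ) = inner ℝ ξ' xb - inner ℝ ξ xb := inner_sub_left _ _ _
  linarith [hu]
end

section
/- Let F satisfy the tangential cone condition with constant η ∈ [0,1) on a ball B containing x^† and let x^† be a solution of F(x) = y. If w ∈ Ker(L(x^†)) and x^† + t w ∈ B for all sufficiently small |t|, then F(x^† + t w) = y for all sufficiently small |t|. -/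
/-- if `w ∈ Ker(L(x†))` and `x† + t w ∈ B` for all small `|t|`, then
`F(x† + t w) = y` for all small `|t|`. -/
theorem solution_along_kernel_direction
    {X Y : Type*} [NormedAddCommGroup X] [InnerProductSpace ℝ X]
    [NormedAddCommGroup Y] [InnerProductSpace ℝ Y]
    (F : X → Y) (L : X → X →L[ℝ] Y) (B : Set X)
    (η : ℝ) (hη0 : 0 ≤ η) (hη1 : η < 1)
    (htc : ∀ x ∈ B, ∀ x' ∈ B, ‖F x - F x' - L x' (x - x')‖ ≤ η * ‖F x - F x'‖)
    (y : Y) (xd : X) (hxd : xd ∈ B) (hsol : F xd = y)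
    (w : X) (hw : w ∈ LinearMap.ker (L xd : X →ₗ[ℝ] Y))
    (hball : ∃ ε > 0, ∀ t : ℝ, |t| < ε → xd + t • w ∈ B) :
    ∃ ε > 0, ∀ t : ℝ, |t| < ε → F (xd + t • w) = y := by
  obtain ⟨ε, hε, hB⟩ := hball
  refine ⟨ε, hε, fun t ht => ?_⟩
  have hx := hB t ht
  have h := htc _ hx _ hxd
  have hk : (L xd) ((xd + t • w) - xd) = 0 := by
    rw [add_sub_cancel_left, map_smul]; exact (congrArg (t • ·) (LinearMap.mem_ker.mp hw)).trans (smul_zero t)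
  rw [hk, sub_zero] at h
  have : ‖F (xd + t • w) - F xd‖ = 0 := by
    nlinarith [norm_nonneg (F (xd + t • w) - F xd)]
  rw [← hsol, ← sub_eq_zero]
  exact norm_eq_zero.mp this
end

section
/- Let x^† be the minimum-norm solution relative to x₀ of F(x) = y in the ball B, i.e. ‖x^† - x₀‖ ≤ ‖x - x₀‖ for every solution x in B. Suppose F satisfies the tangential cone condition with η ∈ [0,1) on B and x^† is in the interior of B. Then x^† - x₀ ∈ Ker(L(x^†))^⊥. -/
/-- the `x₀`-minimum-norm solution `x†` of `F(x) = y` in `B`, lying in the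
interior of `B`, satisfies `x† - x₀ ∈ Ker(L(x†))^⊥` under the tangential cone condition. -/
theorem minimum_norm_solution_orthogonal
    {X Y : Type*} [NormedAddCommGroup X] [InnerProductSpace ℝ X]
    [NormedAddCommGroup Y] [InnerProductSpace ℝ Y]
    (F : X → Y) (L : X → X →L[ℝ] Y) (B : Set X)
    (η : ℝ) (hη0 : 0 ≤ η) (hη1 : η < 1)
    (htc : ∀ x ∈ B, ∀ x' ∈ B, ‖F x - F x' - L x' (x - x')‖ ≤ η * ‖F x - F x'‖)
    (y : Y) (x0 xd : X) (hxd : xd ∈ interior B) (hsol : F xd = y)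
    (hmin : ∀ x ∈ B, F x = y → ‖xd - x0‖ ≤ ‖x - x0‖) :
    xd - x0 ∈ (LinearMap.ker (L xd : X →ₗ[ℝ] Y))ᗮ := by
  rw [Submodule.mem_orthogonal]
  intro w hw
  rw [LinearMap.mem_ker, ContinuousLinearMap.coe_coe] at hw
  obtain ⟨ε, hε, hball⟩ := Metric.mem_nhds_iff.mp (mem_interior_iff_mem_nhds.mp hxd)
  have hB : xd ∈ B := hball (Metric.mem_ball_self hε)
  -- key inequality for all small t
  have key : ∀ t : ℝ, |t| * ‖w‖ < ε →
      0 ≤ 2 * t * inner ℝ (xd - x0) w + t ^ 2 * ‖w‖ ^ 2 := by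
    intro t ht
    have hmem : xd + t • w ∈ B := by
      apply hball
      rw [Metric.mem_ball, dist_eq_norm]
      simpa [norm_smul, abs_mul] using ht
    have hL : L xd ((xd + t • w) - xd) = 0 := by
      have : (xd + t • w) - xd = t • w := by abel
      rw [this, map_smul, hw, smul_zero]
    have htc' := htc (xd + t • w) hmem xd hB
    rw [hL, sub_zero] at htc'
    have hFy : F (xd + t • w) = y := by
      have h0 : (1 - η) * ‖F (xd + t • w) - F xd‖ ≤ 0 := by nlinarith
      have h1 : ‖F (xd + t • w) - F xd‖ ≤ 0 := by
        nlinarith [norm_nonneg (F (xd + t • w) - F xd)]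
      have := le_antisymm h1 (norm_nonneg _)
      rw [norm_eq_zero, sub_eq_zero] at this
      rw [this, hsol]
    have hle := hmin (xd + t • w) hmem hFy
    have hrw : xd + t • w - x0 = (xd - x0) + t • w := by abel
    have hsq : ‖(xd - x0) + t • w‖ ^ 2 =
        ‖xd - x0‖ ^ 2 + 2 * (t * inner ℝ (xd - x0) w) + ‖t • w‖ ^ 2 := by
      rw [← real_inner_smul_right]
      exact norm_add_sq_real _ _
    have hnorm : ‖t • w‖ ^ 2 = t ^ 2 * ‖w‖ ^ 2 := by
      rw [norm_smul]; rw [Real.norm_eq_abs]; rw [mul_pow, sq_abs]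
    have hle2 : ‖xd - x0‖ ^ 2 ≤ ‖(xd - x0) + t • w‖ ^ 2 := by
      rw [← hrw]
      exact pow_le_pow_left₀ (norm_nonneg _) hle 2
    rw [hsq, hnorm] at hle2
    nlinarith
  -- now conclude inner = 0
  have hsym : (inner ℝ w (xd - x0) : ℝ) = inner ℝ (xd - x0) w := real_inner_comm _ _
  rw [hsym]
  by_contra ha
  set a : ℝ := inner ℝ (xd - x0) w with ha_def
  -- choose t small with sign opposite to a
  have hwne : w ≠ 0 := by
    intro h0
    apply ha
    rw [ha_def, h0, inner_zero_right]
  have hwpos : 0 < ‖w‖ := norm_pos_iff.mpr hwne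
  set δ : ℝ := min (1 / ‖w‖ ^ 2) (ε / (2 * |a| * ‖w‖)) with hδ
  have hapos : 0 < |a| := abs_pos.mpr ha
  have hδpos : 0 < δ := lt_min (by positivity) (by positivity)
  set t : ℝ := -δ * a with htdef
  have ht : |t| * ‖w‖ < ε := by
    have : |t| = δ * |a| := by
      rw [htdef, abs_mul, abs_neg, abs_of_pos hδpos]
    rw [this]
    have h2 : δ ≤ ε / (2 * |a| * ‖w‖) := min_le_right _ _
    have : δ * |a| * ‖w‖ ≤ ε / 2 := by
      rw [div_mul_eq_div_div, div_div] at h2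
      calc δ * |a| * ‖w‖ ≤ (ε / (2 * (|a| * ‖w‖))) * |a| * ‖w‖ := by
            apply mul_le_mul_of_nonneg_right _ (le_of_lt hwpos)
            exact mul_le_mul_of_nonneg_right (by simpa [mul_assoc] using h2) (le_of_lt hapos)
        _ = ε / 2 := by field_simp
    linarith
  have := key t ht
  have hta : t * a = -(δ * a ^ 2) := by rw [htdef]; ring
  have hδw : δ * ‖w‖ ^ 2 ≤ 1 := by
    have h1 : δ ≤ 1 / ‖w‖ ^ 2 := min_le_left _ _
    rw [le_div_iff₀ (by positivity)] at h1
    linarith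
  -- 0 ≤ 2 t a + t² ‖w‖² = -2δa² + δ²a²‖w‖² = δ a² (δ‖w‖² - 2) < 0
  have hcontra : 2 * t * a + t ^ 2 * ‖w‖ ^ 2 < 0 := by
    have ha2 : 0 < a ^ 2 := by positivity
    have : 2 * t * a + t ^ 2 * ‖w‖ ^ 2 = δ * a ^ 2 * (δ * ‖w‖ ^ 2 - 2) := by
      rw [htdef]; ring
    rw [this]
    apply mul_neg_of_pos_of_neg (by positivity)
    linarith
  linarith
end

section
/- (Descent inequality for the adaptive heavy ball step) Let R be proper lsc strongly convex with modulus σ, and let x̂ solve F(x) = y. Assume x_n ∈ B with the tangential cone condition (constant η < 1), noisy data ‖y^δ - y‖ ≤ δ. With g_n = L(x_n)*(F(x_n) - y^δ), m_n = ξ_n - ξ_{n-1}, r_n = F(x_n) - y^δ, ξ_{n+1} = ξ_n - α_n g_n + β_n m_n, x_{n+1} = ∇R*(ξ_{n+1}), and Δ_n = D_R^{ξ_n}(x̂, x_n). Then Δ_{n+1} - Δ_n ≤ (1/(4σ)) α_n² ‖g_n‖² - α_n ‖r_n‖² + (1+η) δ α_n ‖r_n‖ + η α_n ‖r_n‖²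 + β_n ⟨m_n, x_n - x̂⟩ + (1/(4σ)) β_n² ‖m_n‖² - (1/(2σ)) α_n β_n ⟨g_n, m_n⟩. -/
-- strengthened subgradient inequality from strong convexity
lemma strong_subgrad_aux
    {X : Type*} [NormedAddCommGroup X] [InnerProductSpace ℝ X]
    (R : X → EReal) (σ : ℝ) (hσ : 0 < σ)
    (x z ξ : X) (a b : ℝ)
    (hax : R x = (a : EReal)) (hbz : R z = (b : EReal))
    (hsc : ∀ t : ℝ, 0 ≤ t → t ≤ 1 →
      R (t • z + (1 - t) • x) + ((σ * t * (1 - t) * ‖z - x‖ ^ 2 : ℝ) : EReal)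
        ≤ ((t : ℝ) : EReal) * R z + (((1 - t : ℝ)) : EReal) * R x)
    (hsub : ∀ w : X, R x + ((inner ℝ ξ (w - x) : ℝ) : EReal) ≤ R w) :
    a + (inner ℝ ξ (z - x) : ℝ) + σ * ‖z - x‖ ^ 2 ≤ b := by
  set c : ℝ := ‖z - x‖ ^ 2 with hc
  have hc0 : 0 ≤ c := by positivity
  set ip : ℝ := (inner ℝ ξ (z - x) : ℝ) with hip
  have key : ∀ t : ℝ, 0 < t → t ≤ 1 → ip + σ * (1 - t) * c ≤ b - a := by
    intro t ht0 ht1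
    have hsc' := hsc t ht0.le ht1
    have hsub' := hsub (t • z + (1 - t) • x)
    have hzx : (t • z + (1 - t) • x) - x = t • (z - x) := by
      rw [smul_sub]; module
    rw [hzx] at hsub'
    have hinner : (inner ℝ ξ (t • (z - x)) : ℝ) = t * ip := by
      rw [real_inner_smul_right]
    rw [hinner, hax] at hsub'
    rw [hax, hbz] at hsc'
    have comb : ((a + t * ip : ℝ) : EReal) + ((σ * t * (1 - t) * c : ℝ) : EReal)
        ≤ ((t : ℝ) : EReal) * ((b : ℝ) : EReal) + (((1 - t : ℝ)) : EReal) * ((a : ℝ) : EReal) := by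
      calc ((a + t * ip : ℝ) : EReal) + ((σ * t * (1 - t) * c : ℝ) : EReal)
          ≤ R (t • z + (1 - t) • x) + ((σ * t * (1 - t) * c : ℝ) : EReal) := by
            apply add_le_add_left
            rw [EReal.coe_add] at *
            exact hsub'
        _ ≤ _ := hsc'
    rw [← EReal.coe_mul, ← EReal.coe_mul, ← EReal.coe_add, ← EReal.coe_add] at comb
    have creal : a + t * ip + σ * t * (1 - t) * c ≤ t * b + (1 - t) * a :=
      EReal.coe_le_coe_iff.mp comb
    have h2 : t * (ip + σ * (1 - t) * c) ≤ t * (b - a) := by nlinarith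
    have := (mul_le_mul_iff_of_pos_left ht0).mp h2
    linarith
  have goal' : ip + σ * c ≤ b - a := by
    apply le_of_forall_pos_le_add
    intro ε hε
    rcases eq_or_lt_of_le hc0 with h0 | hcpos
    · have := key 1 one_pos le_rfl
      rw [← h0] at *
      linarith
    · set t : ℝ := min 1 (ε / (σ * c)) with ht
      have htpos : 0 < t := lt_min one_pos (by positivity)
      have ht1 : t ≤ 1 := min_le_left _ _
      have htc : t * (σ * c) ≤ ε := by
        have h2 : t ≤ ε / (σ * c) := min_le_right _ _
        calc t * (σ * c) ≤ (ε / (σ * c)) * (σ * c) := by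
              apply mul_le_mul_of_nonneg_right h2; positivity
          _ = ε := by field_simp
      have := key t htpos ht1
      nlinarith
  linarith

/-- descent inequality for one step of the adaptive heavy ball method:
`Δ_{n+1} - Δ_n ≤ α_n²‖g_n‖²/(4σ) - α_n‖r_n‖² + (1+η)δα_n‖r_n‖ + ηα_n‖r_n‖²
  + β_n⟨m_n, x_n - x̂⟩ + β_n²‖m_n‖²/(4σ) - α_nβ_n⟨g_n, m_n⟩/(2σ)`. -/
theorem ahb_descent_inequality
    {X Y : Type*} [NormedAddCommGroup X] [InnerProductSpace ℝ X] [CompleteSpace X]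
    [NormedAddCommGroup Y] [InnerProductSpace ℝ Y] [CompleteSpace Y]
    (R : X → EReal) (σ : ℝ) (hσ : 0 < σ)
    (hproper_bot : ∀ x, R x ≠ ⊥)
    (hlsc : LowerSemicontinuous R)
    (hsc : ∀ x' x : X, R x' ≠ ⊤ → R x ≠ ⊤ → ∀ t : ℝ, 0 ≤ t → t ≤ 1 →
      R (t • x' + (1 - t) • x) + ((σ * t * (1 - t) * ‖x' - x‖ ^ 2 : ℝ) : EReal)
        ≤ ((t : ℝ) : EReal) * R x' + (((1 - t : ℝ)) : EReal) * R x)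
    (F : X → Y) (L : X → X →L[ℝ] Y) (B : Set X)
    (η : ℝ) (hη0 : 0 ≤ η) (hη1 : η < 1)
    (htc : ∀ u ∈ B, ∀ v ∈ B, ‖F u - F v - L v (u - v)‖ ≤ η * ‖F u - F v‖)
    (y yδ : Y) (δ : ℝ) (hnoise : ‖yδ - y‖ ≤ δ)
    (xh : X) (hxhB : xh ∈ B) (hxhsol : F xh = y) (hxhdom : R xh ≠ ⊤)
    (xn xnext ξn ξprev ξnext mn gn : X) (rn : Y)
    (αn βn : ℝ) (hαn : 0 ≤ αn) (hβn : 0 ≤ βn)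
    (hxnB : xn ∈ B)
    (hrn : rn = F xn - yδ)
    (hgn : gn = (L xn).adjoint rn)
    (hmn : mn = ξn - ξprev)
    (hξnext : ξnext = ξn - αn • gn + βn • mn)
    -- `x_n = ∇R*(ξ_n)`, i.e. `ξ_n ∈ ∂R(x_n)`:
    (hxndom : R xn ≠ ⊤)
    (hsubn : ∀ z : X, R xn + ((inner ℝ ξn (z - xn) : ℝ) : EReal) ≤ R z)
    -- `x_{n+1} = ∇R*(ξ_{n+1})`, i.e. `ξ_{n+1} ∈ ∂R(x_{n+1})`:
    (hxnextdom : R xnext ≠ ⊤)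
    (hsubnext : ∀ z : X, R xnext + ((inner ℝ ξnext (z - xnext) : ℝ) : EReal) ≤ R z) :
    (R xh - R xnext - ((inner ℝ ξnext (xh - xnext) : ℝ) : EReal))
      - (R xh - R xn - ((inner ℝ ξn (xh - xn) : ℝ) : EReal))
    ≤ ((1 / (4 * σ) * αn ^ 2 * ‖gn‖ ^ 2 - αn * ‖rn‖ ^ 2 + (1 + η) * δ * αn * ‖rn‖
        + η * αn * ‖rn‖ ^ 2 + βn * (inner ℝ mn (xn - xh) : ℝ)
        + 1 / (4 * σ) * βn ^ 2 * ‖mn‖ ^ 2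
        - 1 / (2 * σ) * αn * βn * (inner ℝ gn mn : ℝ) : ℝ) : EReal) := by
  -- lift the three values of R to reals
  obtain ⟨an, han⟩ : ∃ a : ℝ, R xn = (a : EReal) :=
    ⟨(R xn).toReal, (EReal.coe_toReal hxndom (hproper_bot xn)).symm⟩
  obtain ⟨anext, hanext⟩ : ∃ a : ℝ, R xnext = (a : EReal) :=
    ⟨(R xnext).toReal, (EReal.coe_toReal hxnextdom (hproper_bot xnext)).symm⟩
  obtain ⟨ah, hah⟩ : ∃ a : ℝ, R xh = (a : EReal) :=
    ⟨(R xh).toReal, (EReal.coe_toReal hxhdom (hproper_bot xh)).symm⟩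
  rw [han, hanext, hah]
  rw [← EReal.coe_sub, ← EReal.coe_sub, ← EReal.coe_sub, ← EReal.coe_sub, ← EReal.coe_sub]
  rw [EReal.coe_le_coe_iff]
  -- strengthened subgradient inequality
  have hA : an + (inner ℝ ξn (xnext - xn) : ℝ) + σ * ‖xnext - xn‖ ^ 2 ≤ anext :=
    strong_subgrad_aux R σ hσ xn xnext ξn an anext han hanext
      (hsc xnext xn hxnextdom hxndom) hsubn
  set d : X := xnext - xn with hd
  set Δ : X := βn • mn - αn • gn with hΔdef
  have hΔ : ξnext - ξn = Δ := by rw [hξnext, hΔdef]; abel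
  -- inner product identity
  have hid : -(inner ℝ ξn d : ℝ) - (inner ℝ ξnext (xh - xnext) : ℝ) + (inner ℝ ξn (xh - xn) : ℝ)
      = (inner ℝ Δ (xn - xh) : ℝ) + (inner ℝ Δ d : ℝ) := by
    rw [← hΔ, hd]
    simp only [inner_sub_left, inner_sub_right]
    ring
  -- Cauchy-Schwarz + AM-GM step
  have hcs : (inner ℝ Δ d : ℝ) ≤ ‖Δ‖ * ‖d‖ := real_inner_le_norm Δ d
  have hamgm : (inner ℝ Δ d : ℝ) - σ * ‖d‖ ^ 2 ≤ 1 / (4 * σ) * ‖Δ‖ ^ 2 := by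
    have h2 : (0:ℝ) < 4 * σ := by linarith
    have h3 : 1 / (4 * σ) * ‖Δ‖ ^ 2 - (‖Δ‖ * ‖d‖ - σ * ‖d‖ ^ 2)
        = (2 * σ * ‖d‖ - ‖Δ‖) ^ 2 / (4 * σ) := by field_simp; ring
    have h4 : (0:ℝ) ≤ (2 * σ * ‖d‖ - ‖Δ‖) ^ 2 / (4 * σ) := by positivity
    linarith
  -- expand ‖Δ‖²
  have hnormΔ : ‖Δ‖ ^ 2 = βn ^ 2 * ‖mn‖ ^ 2 - 2 * (αn * βn * (inner ℝ gn mn : ℝ)) + αn ^ 2 * ‖gn‖ ^ 2 := by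
    rw [hΔdef, @norm_sub_sq_real, norm_smul, norm_smul, real_inner_smul_left,
      real_inner_smul_right, Real.norm_of_nonneg hβn, Real.norm_of_nonneg hαn,
      real_inner_comm mn gn]
    ring
  -- expand ⟪Δ, xn - xh⟫
  have hΔx : (inner ℝ Δ (xn - xh) : ℝ)
      = βn * (inner ℝ mn (xn - xh) : ℝ) - αn * (inner ℝ gn (xn - xh) : ℝ) := by
    rw [hΔdef, inner_sub_left, real_inner_smul_left, real_inner_smul_left]
  -- lower bound on ⟪gn, xn - xh⟫
  have hG : (1 - η) * ‖rn‖ ^ 2 - (1 + η) * δ * ‖rn‖ ≤ (inner ℝ gn (xn - xh) : ℝ) := by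
    have hadj : (inner ℝ gn (xn - xh) : ℝ) = (inner ℝ rn ((L xn) (xn - xh)) : ℝ) := by
      rw [hgn, ContinuousLinearMap.adjoint_inner_left]
    set w : Y := F xh - F xn - (L xn) (xh - xn) with hw
    have hwb : ‖w‖ ≤ η * ‖F xh - F xn‖ := htc xh hxhB xn hxnB
    have hFn : F xn = rn + yδ := by rw [hrn]; abel
    have hFb : ‖F xh - F xn‖ ≤ ‖rn‖ + δ := by
      rw [hxhsol, hFn]
      calc ‖y - (rn + yδ)‖ = ‖-rn - (yδ - y)‖ := by congr 1; abel
        _ ≤ ‖-rn‖ + ‖yδ - y‖ := norm_sub_le _ _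
        _ ≤ ‖rn‖ + δ := by rw [norm_neg]; linarith
    have hLd : (L xn) (xn - xh) = rn + (yδ - y) + w := by
      have hmap : (L xn) (xh - xn) = F xh - F xn - w := by rw [hw]; abel
      have : (L xn) (xn - xh) = -((L xn) (xh - xn)) := by
        rw [← map_neg]; congr 1; abel
      rw [this, hmap, hxhsol, hFn]; abel
    rw [hadj, hLd, inner_add_right, inner_add_right, real_inner_self_eq_norm_sq]
    have hb1 : -( ‖rn‖ * δ) ≤ (inner ℝ rn (yδ - y) : ℝ) := by
      have := abs_real_inner_le_norm rn (yδ - y)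
      have h2 : ‖rn‖ * ‖yδ - y‖ ≤ ‖rn‖ * δ :=
        mul_le_mul_of_nonneg_left hnoise (norm_nonneg _)
      obtain ⟨hl, hr⟩ := abs_le.mp this
      linarith
    have hb2 : -(‖rn‖ * (η * (‖rn‖ + δ))) ≤ (inner ℝ rn w : ℝ) := by
      have := abs_real_inner_le_norm rn w
      have h2 : ‖rn‖ * ‖w‖ ≤ ‖rn‖ * (η * (‖rn‖ + δ)) := by
        apply mul_le_mul_of_nonneg_left _ (norm_nonneg _)
        calc ‖w‖ ≤ η * ‖F xh - F xn‖ := hwb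
          _ ≤ η * (‖rn‖ + δ) := mul_le_mul_of_nonneg_left hFb hη0
      obtain ⟨hl, hr⟩ := abs_le.mp this
      linarith
    nlinarith [hb1, hb2, sq_nonneg ‖rn‖]
  -- put it all together
  have hstep : (ah - anext - (inner ℝ ξnext (xh - xnext) : ℝ))
      - (ah - an - (inner ℝ ξn (xh - xn) : ℝ))
      ≤ (inner ℝ Δ (xn - xh) : ℝ) + (inner ℝ Δ d : ℝ) - σ * ‖d‖ ^ 2 := by
    have : an - anext ≤ -(inner ℝ ξn d : ℝ) - σ * ‖d‖ ^ 2 := by rw [hd]; linarith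
    linarith [hid]
  have hαG : -(αn * (inner ℝ gn (xn - xh) : ℝ))
      ≤ -(αn * ((1 - η) * ‖rn‖ ^ 2 - (1 + η) * δ * ‖rn‖)) := by
    have := mul_le_mul_of_nonneg_left hG hαn
    linarith
  calc (ah - anext - (inner ℝ ξnext (xh - xnext) : ℝ))
      - (ah - an - (inner ℝ ξn (xh - xn) : ℝ))
      ≤ (inner ℝ Δ (xn - xh) : ℝ) + (inner ℝ Δ d : ℝ) - σ * ‖d‖ ^ 2 := hstep
    _ ≤ (inner ℝ Δ (xn - xh) : ℝ) + 1 / (4 * σ) * ‖Δ‖ ^ 2 := by linarith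
    _ ≤ _ := by
        rw [hΔx, hnormΔ]
        have hcancel : (1:ℝ) / (4 * σ) * (2 * (αn * βn * (inner ℝ gn mn : ℝ)))
            = 1 / (2 * σ) * αn * βn * (inner ℝ gn mn : ℝ) := by
          field_simp; ring
        ring_nf at hαG hcancel ⊢
        linarith
end

section
/- (Uniqueness of weak limit) Let x^† be a solution of F(x) = y in a ball B with x^† - x₀ ∈ Ker(L(x^†))^⊥, and let F satisfy the tangential cone condition with η ∈ [0,1) on B. If x̄ ∈ B solves F(x̄) = y and x̄ - x₀ ∈ Ker(L(x^†))^⊥, then x̄ = x^†. -/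
/-- uniqueness of the weak limit. If both `x†` and `x̄` solve `F(x) = y`
in `B` and both `x† - x₀` and `x̄ - x₀` lie in `Ker(L(x†))^⊥`, then `x̄ = x†`. -/
theorem unique_solution_in_orthogonal_complement
    {X Y : Type*} [NormedAddCommGroup X] [InnerProductSpace ℝ X]
    [NormedAddCommGroup Y] [InnerProductSpace ℝ Y]
    (F : X → Y) (L : X → X →L[ℝ] Y) (B : Set X)
    (η : ℝ) (hη0 : 0 ≤ η) (hη1 : η < 1)
    (htc : ∀ u ∈ B, ∀ v ∈ B, ‖F u - F v - L v (u - v)‖ ≤ η * ‖F u - F v‖)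
    (y : Y) (x0 xd xb : X) (hxd : xd ∈ B) (hxb : xb ∈ B)
    (hxdsol : F xd = y) (hxbsol : F xb = y)
    (hxd0 : xd - x0 ∈ (LinearMap.ker (L xd : X →ₗ[ℝ] Y))ᗮ)
    (hxb0 : xb - x0 ∈ (LinearMap.ker (L xd : X →ₗ[ℝ] Y))ᗮ) :
    xb = xd := by
  have h := htc xb hxb xd hxd
  rw [hxdsol, hxbsol, sub_self] at h
  simp only [norm_zero, mul_zero, zero_sub, norm_neg] at h
  have hker : xb - xd ∈ LinearMap.ker (L xd : X →ₗ[ℝ] Y) := by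
    simpa [LinearMap.mem_ker] using norm_le_zero_iff.mp h
  have hperp : xb - xd ∈ (LinearMap.ker (L xd : X →ₗ[ℝ] Y))ᗮ := by
    have := Submodule.sub_mem _ hxb0 hxd0
    simpa using this
  have := Submodule.inner_right_of_mem_orthogonal hker hperp
  have h0 : xb - xd = 0 := by
    rw [← inner_self_eq_zero (𝕜 := ℝ)]
    exact this
  exact sub_eq_zero.mp h0
end
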